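/- Let P and Q be full-support distributions on a finite set A, and let L ⊆ P(A) be a linear (affine) family of distributions defined by finitely many linear constraints, with P ∈ L. If D(P‖Q) = min_{P̃ ∈ L} D(P̃‖Q), then for every P̃ ∈ L, D(P̃‖Q) = D(P̃‖P) + D(P‖Q). -/

import Mathlib

open Real

/-- KL divergence between two distributions on a finite alphabet. -/
noncomputable def kl {A : Type*} [Fintype A] (P Q : A → ℝ) : ℝ :=
  ∑ a, P a * Real.log (P a / Q a)

lemma mul_log_div_eq (x : ℝ) {y : ℝ} (hy : y ≠ 0) :
    x * Real.log (x / y) = x * Real.log x - x * Real.log y := by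
  rcases eq_or_ne x 0 with h | h
  · simp [h]
  · rw [Real.log_div h hy, mul_sub]

/-- Pythagorean identity for I-projections onto a linear family: if `P ∈ L` minimizes
`D(·‖Q)` over the linear family `L`, then `D(P̃‖Q) = D(P̃‖P) + D(P‖Q)` for all `P̃ ∈ L`. -/
theorem stmt14 {A ι : Type*} [Fintype A] [Fintype ι]
    (P Q : A → ℝ) (c : ι → A → ℝ) (b : ι → ℝ)
    (L : Set (A → ℝ))
    (hL : L = {R : A → ℝ | (∀ a, 0 ≤ R a) ∧ (∑ a, R a = 1) ∧
        ∀ i, ∑ a, R a * c i a = b i})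
    (hPpos : ∀ a, 0 < P a) (hQpos : ∀ a, 0 < Q a)
    (hPsum : ∑ a, P a = 1) (hQsum : ∑ a, Q a = 1)
    (hPL : P ∈ L)
    (hmin : ∀ R ∈ L, kl P Q ≤ kl R Q) :
    ∀ R ∈ L, kl R Q = kl R P + kl P Q := by
  subst hL
  intro R hR
  obtain ⟨hRnn, hRsum, hRc⟩ := hR
  obtain ⟨_, _, hPc⟩ := hPL
  set d : A → ℝ := fun a => R a - P a with hd
  have hdsum : ∑ a, d a = 0 := by
    simp [hd, Finset.sum_sub_distrib, hRsum, hPsum]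
  -- the path function
  set g : ℝ → ℝ := fun t => ∑ a,
      ((P a + t * d a) * Real.log (P a + t * d a)
        - (P a + t * d a) * Real.log (Q a)) with hg
  have hgkl : ∀ t, g t = kl (fun a => P a + t * d a) Q := by
    intro t
    simp only [hg, kl]
    refine Finset.sum_congr rfl fun a _ => ?_
    rw [mul_log_div_eq _ (hQpos a).ne']
  -- derivative of g at 0
  set D : ℝ := ∑ a, ((Real.log (P a) + 1) * d a - d a * Real.log (Q a)) with hD
  have hderiv : HasDerivAt g D 0 := by
    rw [hD]
    apply HasDerivAt.fun_sum
    intro a _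
    have hu : HasDerivAt (fun t : ℝ => P a + t * d a) (d a) 0 :=
      (hasDerivAt_mul_const (d a)).const_add (P a)
    have h1 : HasDerivAt (fun t : ℝ => (P a + t * d a) * Real.log (P a + t * d a))
        ((Real.log (P a) + 1) * d a) 0 := by
      have := (Real.hasDerivAt_mul_log (x := P a + 0 * d a) (by simp [(hPpos a).ne'])).comp 0 hu
      simpa [Function.comp_def] using this
    exact h1.sub (hu.mul_const _)
  -- local minimum at 0
  have hlm : IsLocalMin g 0 := by
    have hev : ∀ᶠ t : ℝ in nhds 0, ∀ a, 0 < P a + t * d a := by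
      rw [Filter.eventually_all]
      intro a
      have hcont : Filter.Tendsto (fun t : ℝ => P a + t * d a) (nhds 0) (nhds (P a)) := by
        have hc : Continuous (fun t : ℝ => P a + t * d a) := by continuity
        simpa using hc.tendsto 0
      exact hcont.eventually (eventually_gt_nhds (hPpos a))
    have hg0 : g 0 = kl P Q := by
      rw [hgkl]; simp [kl]
    filter_upwards [hev] with t ht
    rw [hg0, hgkl]
    apply hmin
    refine ⟨fun a => (ht a).le, ?_, ?_⟩
    · simp [Finset.sum_add_distrib, hPsum, ← Finset.mul_sum, hdsum]
    · intro i
      have : ∑ a, (P a + t * d a) * c i a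
          = ∑ a, P a * c i a + t * ∑ a, d a * c i a := by
        simp [add_mul, Finset.sum_add_distrib, Finset.mul_sum, mul_assoc]
      have hdc : ∑ a, d a * c i a = 0 := by
        simp [hd, sub_mul, Finset.sum_sub_distrib, hRc i, hPc i]
      rw [this, hdc, hPc i]; ring
  have hD0 : D = 0 := hlm.hasDerivAt_eq_zero hderiv
  -- D equals ∑ d a * log (P a / Q a)
  have hDalt : ∑ a, d a * Real.log (P a / Q a) = 0 := by
    have : ∑ a, d a * Real.log (P a / Q a) = D - ∑ a, d a := by
      rw [hD, ← Finset.sum_sub_distrib]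
      refine Finset.sum_congr rfl fun a _ => ?_
      rw [Real.log_div (hPpos a).ne' (hQpos a).ne']
      ring
    rw [this, hD0, hdsum, sub_zero]
  -- final algebra
  have key : kl R Q - kl R P - kl P Q = ∑ a, d a * Real.log (P a / Q a) := by
    simp only [kl, ← Finset.sum_sub_distrib]
    refine Finset.sum_congr rfl fun a _ => ?_
    rw [mul_log_div_eq (R a) (hQpos a).ne', mul_log_div_eq (R a) (hPpos a).ne',
      mul_log_div_eq (P a) (hQpos a).ne', Real.log_div (hPpos a).ne' (hQpos a).ne']
    simp only [hd]
    ring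
  have := key.trans hDalt
  linarith
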